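/- Let Ω ⊆ ℂ be open and f₁, f₂ : Ω → ℂ holomorphic with f₁'(z) ≠ 0 and f₂'(z) ≠ 0 for every z ∈ Ω. Set τ := log(2|f₁'|/(1+|f₁|²)) and ρ := (|f₁'|(1+|f₂|²))/(|f₂'|(1+|f₁|²)). Then ρ satisfies the Ribaucour equation relative to τ on Ω, i.e. ρ² + e^{−2τ} ρ Δ₀ρ = 1 + e^{−2τ}(ρ_x² + ρ_y²). -/

import Mathlib

/-- Partial derivative in the `x`-direction of a function on `ℂ ≅ ℝ²`. -/
noncomputable def pdx (u : ℂ → ℝ) (z : ℂ) : ℝ := fderiv ℝ u z 1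

/-- Partial derivative in the `y`-direction of a function on `ℂ ≅ ℝ²`. -/
noncomputable def pdy (u : ℂ → ℝ) (z : ℂ) : ℝ := fderiv ℝ u z Complex.I

/-- Flat Laplacian `Δ₀u = u_xx + u_yy`. -/
noncomputable def lap (u : ℂ → ℝ) (z : ℂ) : ℝ := pdx (pdx u) z + pdy (pdy u) z

open Complex

noncomputable section

/-- The real-linear map `e ↦ a e + b (conj e)` on `ℂ`. -/
def RibWdm (a b : ℂ) : ℂ →L[ℝ] ℂ :=
  a • ContinuousLinearMap.id ℝ ℂ + b • (Complex.conjCLE : ℂ ≃L[ℝ] ℂ).toContinuousLinearMap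

@[simp] lemma RibWdm_apply (a b e : ℂ) :
    RibWdm a b e = a * e + b * (starRingEnd ℂ) e := by
  simp [RibWdm]

/-- The real-linear map `e ↦ (g e).re` on `ℂ`. -/
def RibMrm (g : ℂ) : ℂ →L[ℝ] ℝ :=
  Complex.reCLM.comp (g • ContinuousLinearMap.id ℝ ℂ)

@[simp] lemma RibMrm_apply (g e : ℂ) : RibMrm g e = (g * e).re := by
  simp [RibMrm]

def HasWD (F : ℂ → ℂ) (a b w : ℂ) : Prop := HasFDerivAt F (RibWdm a b) w
def HasMre (u : ℂ → ℝ) (g : ℂ) (w : ℂ) : Prop := HasFDerivAt u (RibMrm g) w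

lemma clm_ext_CC {D E : ℂ →L[ℝ] ℂ} (h1 : D 1 = E 1) (hI : D I = E I) : D = E := by
  ext e
  have he : e = e.re • (1 : ℂ) + e.im • I := by
    simp [Complex.real_smul, Complex.re_add_im]
  rw [he, map_add, map_add, map_smul, map_smul, map_smul, map_smul, h1, hI]

lemma clm_ext_CR {D E : ℂ →L[ℝ] ℝ} (h1 : D 1 = E 1) (hI : D I = E I) : D = E := by
  ext e
  have he : e = e.re • (1 : ℂ) + e.im • I := by
    simp [Complex.real_smul, Complex.re_add_im]
  rw [he, map_add, map_add, map_smul, map_smul, map_smul, map_smul, h1, hI]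

lemma hasWD_of {F : ℂ → ℂ} {D : ℂ →L[ℝ] ℂ} {a b w : ℂ} (h : HasFDerivAt F D w)
    (h1 : D 1 = a + b) (hI : D I = a * I - b * I) : HasWD F a b w := by
  have : D = RibWdm a b := clm_ext_CC (by simp [h1]) (by simp [hI]; ring)
  rw [HasWD]; rw [← this]; exact h

lemma hasMre_of {u : ℂ → ℝ} {D : ℂ →L[ℝ] ℝ} {g : ℂ} {w : ℂ} (h : HasFDerivAt u D w)
    (h1 : D 1 = g.re) (hI : D I = -g.im) : HasMre u g w := by
  have : D = RibMrm g := clm_ext_CR (by simp [h1]) (by simp [hI])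
  rw [HasMre]; rw [← this]; exact h

variable {F G : ℂ → ℂ} {u v : ℂ → ℝ} {a b c d a' b' : ℂ} {g g' : ℂ} {w : ℂ}

lemma HasWD.toHasFDerivAt (h : HasWD F a b w) : HasFDerivAt F (RibWdm a b) w := h
lemma HasMre.toHasFDerivAt (h : HasMre u g w) : HasFDerivAt u (RibMrm g) w := h

lemma HasWD.congr_ab (h : HasWD F a b w) (ha : a = a') (hb : b = b') : HasWD F a' b' w := by
  rw [← ha, ← hb]; exact h

lemma HasMre.congr_g (h : HasMre u g w) (hg : g = g') : HasMre u g' w := by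
  rw [← hg]; exact h

lemma HasDerivAt.hasWD {f : ℂ → ℂ} {f' : ℂ} (h : HasDerivAt f f' w) : HasWD f f' 0 w :=
  hasWD_of (h.hasFDerivAt.restrictScalars ℝ) (by simp) (by simp [mul_comm])

lemma HasWD.conjC (h : HasWD F a b w) :
    HasWD (fun x => (starRingEnd ℂ) (F x)) ((starRingEnd ℂ) b) ((starRingEnd ℂ) a) w :=
  hasWD_of ((Complex.conjCLE : ℂ ≃L[ℝ] ℂ).toContinuousLinearMap.hasFDerivAt.comp w h.toHasFDerivAt)
    (by simp; ring) (by simp; ring)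

lemma HasWD.add (h : HasWD F a b w) (h' : HasWD G c d w) :
    HasWD (fun x => F x + G x) (a + c) (b + d) w :=
  hasWD_of (h.toHasFDerivAt.add h'.toHasFDerivAt) (by simp; ring) (by simp; ring)

lemma HasWD.sub (h : HasWD F a b w) (h' : HasWD G c d w) :
    HasWD (fun x => F x - G x) (a - c) (b - d) w :=
  hasWD_of (h.toHasFDerivAt.sub h'.toHasFDerivAt) (by simp; ring) (by simp; ring)

lemma HasWD.const_mul (h : HasWD F a b w) (c : ℂ) :
    HasWD (fun x => c * F x) (c * a) (c * b) w :=
  hasWD_of (h.toHasFDerivAt.const_mul c) (by simp; ring) (by simp; ring)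

lemma HasWD.mul (h : HasWD F a b w) (h' : HasWD G c d w) :
    HasWD (fun x => F x * G x) (F w * c + G w * a) (F w * d + G w * b) w :=
  hasWD_of (h.toHasFDerivAt.mul h'.toHasFDerivAt)
    (by simp [smul_eq_mul]; ring) (by simp [smul_eq_mul]; ring)

lemma HasWD.inv (h : HasWD F a b w) (hx : F w ≠ 0) :
    HasWD (fun x => (F x)⁻¹) (-((F w) ^ 2)⁻¹ * a) (-((F w) ^ 2)⁻¹ * b) w := by
  have hinv : HasFDerivAt (fun x : ℂ => x⁻¹)
      (((ContinuousLinearMap.smulRight (1 : ℂ →L[ℂ] ℂ) (-((F w) ^ 2)⁻¹)) : ℂ →L[ℂ] ℂ).restrictScalars ℝ) (F w) :=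
    (hasFDerivAt_inv hx).restrictScalars ℝ
  exact hasWD_of (hinv.comp w h.toHasFDerivAt) (by simp; ring) (by simp; ring)

lemma HasWD.re (h : HasWD F a b w) :
    HasMre (fun x => (F x).re) (a + (starRingEnd ℂ) b) w :=
  hasMre_of (Complex.reCLM.hasFDerivAt.comp w h.toHasFDerivAt) (by simp) (by simp; ring)

lemma HasMre.add (h : HasMre u g w) (h' : HasMre v g' w) :
    HasMre (fun x => u x + v x) (g + g') w :=
  hasMre_of (h.toHasFDerivAt.add h'.toHasFDerivAt) (by simp) (by simp; ring)

lemma HasMre.sub (h : HasMre u g w) (h' : HasMre v g' w) :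
    HasMre (fun x => u x - v x) (g - g') w :=
  hasMre_of (h.toHasFDerivAt.sub h'.toHasFDerivAt) (by simp) (by simp; ring)

lemma HasMre.const_add (h : HasMre u g w) (c : ℝ) :
    HasMre (fun x => c + u x) g w :=
  hasMre_of (h.toHasFDerivAt.const_add c) (by simp) (by simp)

lemma HasMre.div_const (h : HasMre u g w) (c : ℝ) :
    HasMre (fun x => u x / c) (((c⁻¹ : ℝ) : ℂ) * g) w := by
  simp only [div_eq_inv_mul]
  exact hasMre_of (h.toHasFDerivAt.const_mul c⁻¹)
    (by rw [Complex.re_ofReal_mul]; simp) (by rw [Complex.im_ofReal_mul]; simp)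

lemma HasMre.log (h : HasMre u g w) (hx : u w ≠ 0) :
    HasMre (fun x => Real.log (u x)) ((((u w)⁻¹ : ℝ) : ℂ) * g) w :=
  hasMre_of (h.toHasFDerivAt.log hx)
    (by rw [Complex.re_ofReal_mul]; simp) (by rw [Complex.im_ofReal_mul]; simp)

lemma HasMre.exp (h : HasMre u g w) :
    HasMre (fun x => Real.exp (u x)) (((Real.exp (u w) : ℝ) : ℂ) * g) w :=
  hasMre_of (h.toHasFDerivAt.exp)
    (by rw [Complex.re_ofReal_mul]; simp) (by rw [Complex.im_ofReal_mul]; simp)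

lemma HasMre.inv (h : HasMre u g w) (hx : u w ≠ 0) :
    HasMre (fun x => (u x)⁻¹) (((-(((u w) ^ 2)⁻¹) : ℝ) : ℂ) * g) w :=
  hasMre_of ((hasDerivAt_inv hx).comp_hasFDerivAt w h.toHasFDerivAt)
    (by rw [Complex.re_ofReal_mul]; simp) (by rw [Complex.im_ofReal_mul]; simp)

lemma HasMre.ofReal (h : HasMre u g w) :
    HasWD (fun x => ((u x : ℝ) : ℂ)) (g / 2) ((starRingEnd ℂ) g / 2) w :=
  hasWD_of (Complex.ofRealCLM.hasFDerivAt.comp w h.toHasFDerivAt)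
    (by simp [Complex.ext_iff]; ring) (by simp [Complex.ext_iff]; ring)

lemma HasWD.normSq (h : HasWD F a b w) :
    HasMre (fun x => Complex.normSq (F x))
      (2 * ((starRingEnd ℂ) (F w) * a + F w * (starRingEnd ℂ) b)) w := by
  have h2 := (h.mul h.conjC).re
  have hfun : (fun x => (F x * (starRingEnd ℂ) (F x)).re) = fun x => Complex.normSq (F x) := by
    funext x; rw [Complex.mul_conj]; simp
  rw [HasMre] at h2 ⊢
  rw [hfun] at h2
  exact hasMre_of h2 (by simp [map_add, map_mul]; ring) (by simp [map_add, map_mul]; ring)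

lemma HasMre.pdx_eq (h : HasMre u g w) : pdx u w = g.re := by
  have h' : HasFDerivAt u (RibMrm g) w := h
  rw [pdx, h'.fderiv]; simp

lemma HasMre.pdy_eq (h : HasMre u g w) : pdy u w = -g.im := by
  have h' : HasFDerivAt u (RibMrm g) w := h
  rw [pdy, h'.fderiv]; simp



lemma rib_pdx_congr {z : ℂ} (h : u =ᶠ[nhds z] v) : pdx u z = pdx v z := by
  rw [pdx, pdx, h.fderiv_eq]

lemma rib_pdy_congr {z : ℂ} (h : u =ᶠ[nhds z] v) : pdy u z = pdy v z := by
  rw [pdy, pdy, h.fderiv_eq]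

lemma rib_lap_congr {Ω : Set ℂ} {z : ℂ} (hΩ : IsOpen Ω) (hz : z ∈ Ω)
    (h : ∀ w ∈ Ω, u w = v w) : lap u z = lap v z := by
  have hev : ∀ w ∈ Ω, u =ᶠ[nhds w] v := fun w hw =>
    Filter.eventuallyEq_of_mem (hΩ.mem_nhds hw) h
  have hx : pdx u =ᶠ[nhds z] pdx v :=
    Filter.eventuallyEq_of_mem (hΩ.mem_nhds hz) fun w hw => rib_pdx_congr (hev w hw)
  have hy : pdy u =ᶠ[nhds z] pdy v :=
    Filter.eventuallyEq_of_mem (hΩ.mem_nhds hz) fun w hw => rib_pdy_congr (hev w hw)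
  rw [lap, lap, rib_pdx_congr hx, rib_pdy_congr hy]

lemma rib_lap_eq {u : ℂ → ℝ} {G : ℂ → ℂ} {z α β : ℂ}
    (h : ∀ᶠ w in nhds z, HasMre u (G w) w) (hG : HasWD G α β z) :
    lap u z = 2 * β.re := by
  have hx : pdx u =ᶠ[nhds z] fun w => (G w).re := h.mono fun w hw => hw.pdx_eq
  have hy : pdy u =ᶠ[nhds z] fun w => -(G w).im := h.mono fun w hw => hw.pdy_eq
  have hre : HasMre (fun x => (G x).re) (α + (starRingEnd ℂ) β) z := hG.re
  have him : HasMre (fun x => -(G x).im) (I * α + (starRingEnd ℂ) (I * β)) z := by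
    have h2 := (hG.const_mul I).re
    have hf : (fun x => (I * G x).re) = fun x => -(G x).im := by
      funext x; simp [Complex.mul_re]
    rw [hf] at h2
    exact h2
  have e1 : pdx (pdx u) z = (α + (starRingEnd ℂ) β).re := by
    rw [pdx, hx.fderiv_eq]; exact hre.pdx_eq
  have e2 : pdy (pdy u) z = -(I * α + (starRingEnd ℂ) (I * β)).im := by
    rw [pdy, hy.fderiv_eq]; exact him.pdy_eq
  rw [lap, e1, e2]
  simp
  ring



/-- `log(|f'|/(1+|f|²))`, written via `normSq`. -/
noncomputable def sphL (f : ℂ → ℂ) : ℂ → ℝ := fun w =>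
  Real.log (Complex.normSq (deriv f w)) / 2 - Real.log (1 + Complex.normSq (f w))

/-- complex gradient of `sphL f`. -/
noncomputable def sphG (f : ℂ → ℂ) : ℂ → ℂ := fun w =>
  deriv (deriv f) w / deriv f w
    - 2 * ((starRingEnd ℂ) (f w) * deriv f w) * (((1 + Complex.normSq (f w) : ℝ) : ℂ))⁻¹

lemma sphL_hasMre {Ω : Set ℂ} {f : ℂ → ℂ} {w : ℂ}
    (hf : AnalyticOnNhd ℂ f Ω) (hw : w ∈ Ω) (h' : deriv f w ≠ 0) :
    HasMre (sphL f) (sphG f w) w := by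
  have hfd : HasDerivAt f (deriv f w) w := ((hf w hw).differentiableAt).hasDerivAt
  have hgd : HasDerivAt (deriv f) (deriv (deriv f) w) w :=
    ((hf.deriv w hw).differentiableAt).hasDerivAt
  have hNgne : Complex.normSq (deriv f w) ≠ 0 := by
    simpa using h'
  have hQpos : (0:ℝ) < 1 + Complex.normSq (f w) := by
    nlinarith [Complex.normSq_nonneg (f w)]
  have hQne : (1 : ℝ) + Complex.normSq (f w) ≠ 0 := ne_of_gt hQpos
  have h1 := (hgd.hasWD.normSq.log hNgne).div_const 2
  have h2 := (hfd.hasWD.normSq.const_add 1).log hQne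
  have h12 := h1.sub h2
  refine h12.congr_g ?_
  have e1 : ((Complex.normSq (deriv f w) : ℝ) : ℂ) = deriv f w * (starRingEnd ℂ) (deriv f w) :=
    (Complex.mul_conj _).symm
  have e2 : ((Complex.normSq (f w) : ℝ) : ℂ) = f w * (starRingEnd ℂ) (f w) :=
    (Complex.mul_conj _).symm
  have hQC : ((1 : ℂ) + f w * (starRingEnd ℂ) (f w)) ≠ 0 := by
    rw [← e2]
    exact_mod_cast hQne
  have hcg : (starRingEnd ℂ) (deriv f w) ≠ 0 := by
    simpa using h'
  rw [sphG]
  push_cast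
  rw [e1, e2]
  simp only [map_zero]
  field_simp
  ring

lemma sphG_hasWD {Ω : Set ℂ} {f : ℂ → ℂ} {w : ℂ} (hΩ : IsOpen Ω)
    (hf : AnalyticOnNhd ℂ f Ω) (hw : w ∈ Ω) (h' : deriv f w ≠ 0) :
    ∃ a, HasWD (sphG f) a
      (((-(2 * Complex.normSq (deriv f w)) / (1 + Complex.normSq (f w)) ^ 2 : ℝ)) : ℂ) w := by
  have hfd : HasDerivAt f (deriv f w) w := ((hf w hw).differentiableAt).hasDerivAt
  have hgd : HasDerivAt (deriv f) (deriv (deriv f) w) w :=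
    ((hf.deriv w hw).differentiableAt).hasDerivAt
  have hQpos : (0:ℝ) < 1 + Complex.normSq (f w) := by
    nlinarith [Complex.normSq_nonneg (f w)]
  have hQne : (1 : ℝ) + Complex.normSq (f w) ≠ 0 := ne_of_gt hQpos
  have hT1 : DifferentiableAt ℂ (fun x => deriv (deriv f) x / deriv f x) w :=
    ((hf.deriv.deriv w hw).differentiableAt).div ((hf.deriv w hw).differentiableAt) h'
  have hT1' := hT1.hasDerivAt.hasWD
  have hX := (hfd.hasWD.conjC.mul hgd.hasWD).const_mul 2
  have hY := ((hfd.hasWD.normSq.const_add 1).inv hQne).ofReal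
  have hws := hT1'.sub (hX.mul hY)
  have hval : (0 - (2 * ((starRingEnd ℂ) (f w) * deriv f w) *
          ((starRingEnd ℂ) (((-((1 + Complex.normSq (f w)) ^ 2)⁻¹ : ℝ) : ℂ) *
              (2 * ((starRingEnd ℂ) (f w) * deriv f w + f w * (starRingEnd ℂ) 0))) / 2) +
        (((1 + Complex.normSq (f w))⁻¹ : ℝ) : ℂ) *
          (2 * ((starRingEnd ℂ) (f w) * 0 + deriv f w * (starRingEnd ℂ) (deriv f w)))))
      = (((-(2 * Complex.normSq (deriv f w)) / (1 + Complex.normSq (f w)) ^ 2 : ℝ)) : ℂ) := by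
    have e2 : ((Complex.normSq (f w) : ℝ) : ℂ) = f w * (starRingEnd ℂ) (f w) :=
      (Complex.mul_conj _).symm
    have e1 : ((Complex.normSq (deriv f w) : ℝ) : ℂ) =
        deriv f w * (starRingEnd ℂ) (deriv f w) := (Complex.mul_conj _).symm
    have hQC : ((1 : ℂ) + f w * (starRingEnd ℂ) (f w)) ≠ 0 := by
      rw [← e2]
      exact_mod_cast hQne
    simp only [map_mul, map_add, map_zero, mul_zero, add_zero, zero_sub, map_div₀,
      Complex.conj_ofReal, Complex.conj_conj, map_ofNat, map_neg, map_pow, map_one]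
    push_cast
    rw [e1, e2]
    field_simp
    ring
  have hws2 := hws.congr_ab rfl hval
  have hfun : sphG f = fun x => (deriv (deriv f) x / deriv f x) -
      (2 * ((starRingEnd ℂ) (f x) * deriv f x)) *
        ((((1 + Complex.normSq (f x)) ⁻¹ : ℝ)) : ℂ) := by
    funext x
    simp only [sphG, Complex.ofReal_inv]
  rw [← hfun] at hws2
  exact ⟨_, hws2⟩

end

set_option maxHeartbeats 1000000

/-- for `f₁, f₂` holomorphic on an open `Ω ⊆ ℂ` with nonvanishing
derivatives, the function `ρ = (|f₁'|(1+|f₂|²))/(|f₂'|(1+|f₁|²))` satisfies the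
Ribaucour equation `ρ² + e^{-2τ} ρ Δ₀ρ = 1 + e^{-2τ}(ρ_x² + ρ_y²)` relative to
`τ = log (2|f₁'|/(1+|f₁|²))` on `Ω`. -/
theorem ribaucour_equation_of_holomorphic_pair
    (Ω : Set ℂ) (hΩ : IsOpen Ω) (f₁ f₂ : ℂ → ℂ)
    (hf₁ : DifferentiableOn ℂ f₁ Ω) (hf₁' : ∀ z ∈ Ω, deriv f₁ z ≠ 0)
    (hf₂ : DifferentiableOn ℂ f₂ Ω) (hf₂' : ∀ z ∈ Ω, deriv f₂ z ≠ 0)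
    (τ : ℂ → ℝ)
    (hτ : ∀ z ∈ Ω, τ z =
      Real.log (2 * ‖deriv f₁ z‖ / (1 + ‖f₁ z‖ ^ 2)))
    (ρ : ℂ → ℝ)
    (hρ : ∀ z ∈ Ω, ρ z =
      ‖deriv f₁ z‖ * (1 + ‖f₂ z‖ ^ 2) /
        (‖deriv f₂ z‖ * (1 + ‖f₁ z‖ ^ 2))) :
    ∀ z ∈ Ω, ρ z ^ 2 + Real.exp (-(2 * τ z)) * ρ z * lap ρ z
      = 1 + Real.exp (-(2 * τ z)) * (pdx ρ z ^ 2 + pdy ρ z ^ 2) := by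
  have hA1 : AnalyticOnNhd ℂ f₁ Ω := hf₁.analyticOnNhd hΩ
  have hA2 : AnalyticOnNhd ℂ f₂ Ω := hf₂.analyticOnNhd hΩ
  -- the exponential form of ρ
  have hLm : ∀ w ∈ Ω, HasMre (fun x => sphL f₁ x - sphL f₂ x)
      (sphG f₁ w - sphG f₂ w) w := fun w hw =>
    (sphL_hasMre hA1 hw (hf₁' w hw)).sub (sphL_hasMre hA2 hw (hf₂' w hw))
  have hUm : ∀ w ∈ Ω, HasMre (fun x => Real.exp (sphL f₁ x - sphL f₂ x))
      (((Real.exp (sphL f₁ w - sphL f₂ w) : ℝ) : ℂ) * (sphG f₁ w - sphG f₂ w)) w :=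
    fun w hw => (hLm w hw).exp
  -- ρ agrees with the exponential form on Ω
  have habs : ∀ w ∈ Ω, ρ w = Real.exp (sphL f₁ w - sphL f₂ w) := by
    intro w hw
    have e1 : Real.exp (Real.log (Complex.normSq (deriv f₁ w)) / 2)
        = ‖deriv f₁ w‖ := by
      rw [Complex.normSq_eq_norm_sq, Real.log_pow]
      push_cast
      have hc : (2:ℝ) * (Real.log (‖deriv f₁ w‖) / 2)
          = Real.log (‖deriv f₁ w‖) := by ring
      rw [show ((2:ℝ) * Real.log (‖deriv f₁ w‖)) / 2
          = Real.log (‖deriv f₁ w‖) from by ring,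
        Real.exp_log (norm_pos_iff.mpr (hf₁' w hw))]
    have e2 : Real.exp (Real.log (Complex.normSq (deriv f₂ w)) / 2)
        = ‖deriv f₂ w‖ := by
      rw [Complex.normSq_eq_norm_sq, Real.log_pow]
      push_cast
      have hc : (2:ℝ) * (Real.log (‖deriv f₂ w‖) / 2)
          = Real.log (‖deriv f₂ w‖) := by ring
      rw [show ((2:ℝ) * Real.log (‖deriv f₂ w‖)) / 2
          = Real.log (‖deriv f₂ w‖) from by ring,
        Real.exp_log (norm_pos_iff.mpr (hf₂' w hw))]
    have p1 : (0:ℝ) < 1 + Complex.normSq (f₁ w) := by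
      nlinarith [Complex.normSq_nonneg (f₁ w)]
    have p2 : (0:ℝ) < 1 + Complex.normSq (f₂ w) := by
      nlinarith [Complex.normSq_nonneg (f₂ w)]
    rw [hρ w hw, sphL, sphL, Real.exp_sub, Real.exp_sub, Real.exp_sub, e1, e2,
      Real.exp_log p1, Real.exp_log p2, Complex.sq_norm, Complex.sq_norm]
    have hb2 : 0 < ‖deriv f₂ w‖ :=
      norm_pos_iff.mpr (hf₂' w hw)
    have hb1 : 0 < ‖deriv f₁ w‖ :=
      norm_pos_iff.mpr (hf₁' w hw)
    rw [div_eq_div_iff (mul_pos hb2 p1).ne' (div_pos hb2 p2).ne']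
    field_simp
  intro z hz
  -- second-order data at z
  obtain ⟨a₁, h1⟩ := sphG_hasWD hΩ hA1 hz (hf₁' z hz)
  obtain ⟨a₂, h2⟩ := sphG_hasWD hΩ hA2 hz (hf₂' z hz)
  have hGL : HasWD (fun x => sphG f₁ x - sphG f₂ x) (a₁ - a₂)
      ((((-(2 * Complex.normSq (deriv f₁ z)) / (1 + Complex.normSq (f₁ z)) ^ 2 : ℝ)) : ℂ)
        - (((-(2 * Complex.normSq (deriv f₂ z)) / (1 + Complex.normSq (f₂ z)) ^ 2 : ℝ)) : ℂ)) z :=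
    h1.sub h2
  have hU0 := hUm z hz
  have hGrho := (hU0.ofReal).mul hGL
  -- abbreviations
  set A := Complex.normSq (deriv f₁ z) with hA
  set B := Complex.normSq (deriv f₂ z) with hB
  set P := 1 + Complex.normSq (f₁ z) with hP
  set Q := 1 + Complex.normSq (f₂ z) with hQ
  set r := Real.exp (sphL f₁ z - sphL f₂ z) with hr
  set X := (sphG f₁ z - sphG f₂ z).re with hX
  set Y := (sphG f₁ z - sphG f₂ z).im with hY
  have hApos : (0:ℝ) < A := by
    rw [hA]; exact Complex.normSq_pos.2 (hf₁' z hz)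
  have hBpos : (0:ℝ) < B := by
    rw [hB]; exact Complex.normSq_pos.2 (hf₂' z hz)
  have hPpos : (0:ℝ) < P := by
    rw [hP]; nlinarith [Complex.normSq_nonneg (f₁ z)]
  have hQpos : (0:ℝ) < Q := by
    rw [hQ]; nlinarith [Complex.normSq_nonneg (f₂ z)]
  have hrpos : (0:ℝ) < r := Real.exp_pos _
  -- first derivatives of ρ at z
  have hevρ : ρ =ᶠ[nhds z] fun w => Real.exp (sphL f₁ w - sphL f₂ w) :=
    Filter.eventuallyEq_of_mem (hΩ.mem_nhds hz) habs
  have hpdx : pdx ρ z = r * X := by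
    rw [rib_pdx_congr hevρ, hU0.pdx_eq, Complex.re_ofReal_mul]
  have hpdy : pdy ρ z = -(r * Y) := by
    rw [rib_pdy_congr hevρ, hU0.pdy_eq, Complex.im_ofReal_mul]
  -- Laplacian of ρ at z
  have hlap0 : lap ρ z = lap (fun w => Real.exp (sphL f₁ w - sphL f₂ w)) z :=
    rib_lap_congr hΩ hz habs
  have hev : ∀ᶠ w in nhds z, HasMre (fun x => Real.exp (sphL f₁ x - sphL f₂ x))
      (((Real.exp (sphL f₁ w - sphL f₂ w) : ℝ) : ℂ) * (sphG f₁ w - sphG f₂ w)) w := by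
    filter_upwards [hΩ.mem_nhds hz] with w hw using hUm w hw
  have hlap1 := rib_lap_eq hev hGrho
  -- compute the real part of the second Wirtinger coefficient
  have hGLc : (sphG f₁ z - sphG f₂ z) * (starRingEnd ℂ) (sphG f₁ z - sphG f₂ z)
      = ((X : ℝ) : ℂ) ^ 2 + ((Y : ℝ) : ℂ) ^ 2 := by
    rw [Complex.mul_conj, Complex.normSq_apply]
    push_cast
    rw [← hX, ← hY]
    ring
  have hbval : ((r : ℝ) : ℂ)
        * ((((-(2 * A) / P ^ 2 : ℝ)) : ℂ) - (((-(2 * B) / Q ^ 2 : ℝ)) : ℂ))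
        + (sphG f₁ z - sphG f₂ z) *
          ((starRingEnd ℂ) (((r : ℝ) : ℂ) * (sphG f₁ z - sphG f₂ z)) / 2)
      = ((r * (-(2 * A) / P ^ 2 + 2 * B / Q ^ 2) + r * (X ^ 2 + Y ^ 2) / 2 : ℝ) : ℂ) := by
    rw [map_mul, Complex.conj_ofReal]
    push_cast
    linear_combination ((r : ℂ) / 2) * hGLc
  have hlap : lap ρ z = r * (X ^ 2 + Y ^ 2) + r * (4 * B / Q ^ 2 - 4 * A / P ^ 2) := by
    rw [hlap0, hlap1, hbval]
    rw [Complex.ofReal_re]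
    ring
  -- ρ z = r and r² in closed form
  have hρz : ρ z = r := habs z hz
  have hr2 : r ^ 2 = A * Q ^ 2 / (B * P ^ 2) := by
    have hsum : (sphL f₁ z - sphL f₂ z) + (sphL f₁ z - sphL f₂ z)
        = Real.log (A * Q ^ 2 / (B * P ^ 2)) := by
      rw [Real.log_div (by positivity) (by positivity), Real.log_mul (by positivity)
        (by positivity), Real.log_mul (by positivity) (by positivity),
        Real.log_pow, Real.log_pow, sphL, sphL]
      push_cast
      ring
    rw [pow_two, ← Real.exp_add, hsum, Real.exp_log (by positivity)]
  -- the conformal factor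
  have hE : Real.exp (-(2 * τ z)) = P ^ 2 / (4 * A) := by
    rw [hτ z hz]
    have habs1 : (0:ℝ) < 2 * ‖deriv f₁ z‖ / (1 + ‖f₁ z‖ ^ 2) := by
      have := norm_pos_iff.mpr (hf₁' z hz)
      positivity
    rw [show -(2 * Real.log (2 * ‖deriv f₁ z‖ / (1 + ‖f₁ z‖ ^ 2)))
        = Real.log (((2 * ‖deriv f₁ z‖ / (1 + ‖f₁ z‖ ^ 2)) ^ 2)⁻¹) by
      rw [Real.log_inv, Real.log_pow]; push_cast; ring]
    rw [Real.exp_log (by positivity)]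
    rw [div_pow, mul_pow, Complex.sq_norm, Complex.sq_norm, ← hA, ← hP]
    rw [inv_div]
    norm_num
  -- final algebra
  have hAne := ne_of_gt hApos
  have hBne := ne_of_gt hBpos
  have hPne := ne_of_gt hPpos
  have hQne := ne_of_gt hQpos
  have key : r ^ 2 * (B * P ^ 2) = A * Q ^ 2 := by
    rw [hr2]
    field_simp
  clear_value A B P Q r X Y
  rw [hρz, hpdx, hpdy, hlap, hE]
  field_simp
  linear_combination 4 * key
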